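/- With θ̄[0,n] and the chains D^{(n)} as above, driven by an i.i.d. translation-invariant sequence: for any l ≥ 0 and n ≥ 0, P(θ̄[0,n] < -l) ≤ sum_{k=l+1}^{l+n+1} P(D^{(0)}_k = 0). -/

import Mathlib

open MeasureTheory

namespace Seqgeq1Aux

/-- History of values `D^{(n)}_{n}, …, D^{(n)}_{n+k}` of the auxiliary chain driven by `f`. -/
def hist (f : ℤ → ℕ) (n : ℤ) : ℕ → List ℕ
  | 0 => [0]
  | k + 1 =>
    hist f n k ++ [((k : ℤ) + 1 -
      (WithBot.unbotD 0 ((((Finset.range (k + 1)).filter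
          (fun j => (hist f n k).getD j 1 = 0))).max) : ℕ) -
      (f (n + (k + 1 : ℕ)) : ℤ)).toNat]

def val (f : ℤ → ℕ) (n : ℤ) (k : ℕ) : ℕ := (hist f n k).getD k 1

lemma hist_length (f : ℤ → ℕ) (n : ℤ) : ∀ k, (hist f n k).length = k + 1
  | 0 => rfl
  | k + 1 => by simp [hist, hist_length f n k]

lemma val_zero (f : ℤ → ℕ) (n : ℤ) : val f n 0 = 0 := rfl

lemma getD_hist (f : ℤ → ℕ) (n : ℤ) :
    ∀ k j, j ≤ k → (hist f n k).getD j 1 = val f n j := by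
  intro k
  induction k with
  | zero => intro j hj; interval_cases j; rfl
  | succ k IH =>
    intro j hj
    rcases Nat.lt_or_ge j (k + 1) with h | h
    · rw [hist, List.getD_append _ _ _ _ (by rw [hist_length]; omega)]
      exact IH j (by omega)
    · have : j = k + 1 := by omega
      subst this; rfl

lemma val_succ (f : ℤ → ℕ) (n : ℤ) (k : ℕ) :
    val f n (k + 1) = ((k : ℤ) + 1 -
      (WithBot.unbotD 0 ((((Finset.range (k + 1)).filter (fun j => val f n j = 0))).max) : ℕ) -
      (f (n + (k + 1 : ℕ)) : ℤ)).toNat := by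
  have hfilter : (Finset.range (k + 1)).filter (fun j => (hist f n k).getD j 1 = 0)
      = (Finset.range (k + 1)).filter (fun j => val f n j = 0) := by
    apply Finset.filter_congr
    intro j hj
    rw [getD_hist f n k j (Nat.lt_succ_iff.mp (Finset.mem_range.mp hj))]
  show (hist f n (k + 1)).getD (k + 1) 1 = _
  rw [hist, List.getD_append_right _ _ _ _ (by rw [hist_length]), hist_length, hfilter]
  simp

lemma hist_shift (f : ℤ → ℕ) (s n : ℤ) :
    ∀ k, hist (fun j => f (j + s)) n k = hist f (n + s) k
  | 0 => rfl
  | k + 1 => by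
    rw [hist, hist, hist_shift f s n k]
    have h : n + (k + 1 : ℕ) + s = n + s + (k + 1 : ℕ) := by ring
    simp only [h]

lemma val_shift (f : ℤ → ℕ) (s n : ℤ) (k : ℕ) :
    val (fun j => f (j + s)) n k = val f (n + s) k := by
  unfold val; rw [hist_shift]

lemma hist_congr (f g : ℤ → ℕ) (n : ℤ) :
    ∀ k, (∀ m : ℕ, 1 ≤ m → m ≤ k → f (n + m) = g (n + m)) → hist f n k = hist g n k
  | 0, _ => rfl
  | k + 1, h => by
    rw [hist, hist, hist_congr f g n k (fun m h1 h2 => h m h1 (h2.trans (Nat.le_succ k))),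
      h (k + 1) (by omega) le_rfl]

lemma val_congr (f g : ℤ → ℕ) (n : ℤ) (k : ℕ)
    (h : ∀ m : ℕ, 1 ≤ m → m ≤ k → f (n + m) = g (n + m)) : val f n k = val g n k := by
  unfold val; rw [hist_congr f g n k h]

lemma measurable_val (n : ℤ) (k : ℕ) : Measurable fun f : ℤ → ℕ => val f n k := by
  classical
  set s : Finset ℤ := Finset.Icc (n + 1) (n + k) with hs
  have key : (fun f : ℤ → ℕ => val f n k) =
      (fun g : (↥s → ℕ) => val (fun j => if h : j ∈ s then g ⟨j, h⟩ else 0) n k) ∘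
      (fun f (x : ↥s) => f x.1) := by
    funext f
    simp only [Function.comp]
    apply val_congr
    intro m h1 h2
    rw [dif_pos]
    simp only [hs, Finset.mem_Icc]
    omega
  rw [key]
  exact (measurable_of_countable _).comp
    (measurable_pi_lambda _ fun x => measurable_pi_apply _)

end Seqgeq1Aux

open Seqgeq1Aux

/-- Lemma `seqgeq1`: for the regeneration time
`θ̄[0,n] = max{j ≤ 0 : L̄_i ≤ i - j, i = j,…,n}` defined from a translation
invariant driving sequence `(L̄_i)`, and the auxiliary chains `D⁽ⁿ⁾` defined
from the same sequence, `P(θ̄[0,n] < -l) ≤ ∑_{k=l+1}^{l+n+1} P(D⁽⁰⁾_k = 0)`. -/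
theorem stmt_7 {Ω : Type*} [MeasurableSpace Ω] (P : Measure Ω)
    [IsProbabilityMeasure P]
    (Lbar : ℤ → Ω → ℕ) (hmeas : ∀ i, Measurable (Lbar i))
    (hshift : ∀ s : ℤ,
      Measure.map (fun ω => (fun i : ℤ => Lbar (i + s) ω)) P =
        Measure.map (fun ω => (fun i : ℤ => Lbar i ω)) P)
    (D : ℤ → ℤ → Ω → ℕ)
    (hD0 : ∀ n i ω, i ≤ n → D n i ω = 0)
    (hDrec : ∀ n i ω, n < i →
      D n i ω = (i - sSup {l : ℤ | l < i ∧ D n l ω = 0} - (Lbar i ω : ℤ)).toNat)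
    (n l : ℕ) :
    P {ω | ∀ j : ℤ, -(l : ℤ) ≤ j → j ≤ 0 →
        ¬ (∀ i : ℤ, j ≤ i → i ≤ n → (Lbar i ω : ℤ) ≤ i - j)} ≤
      ∑ k ∈ Finset.Icc (l + 1) (l + n + 1), P {ω | D 0 (k : ℤ) ω = 0} := by
  classical
  set m : ℤ := -(l : ℤ) - 1 with hmdef
  -- Step 0: D agrees with `val`.
  have Dval : ∀ (n' : ℤ) (k : ℕ) (ω : Ω), D n' (n' + k) ω = val (fun j => Lbar j ω) n' k := by
    intro n' k ω
    induction k using Nat.strong_induction_on with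
    | _ k IH =>
      cases k with
      | zero => simpa [val_zero] using hD0 n' (n' + ((0 : ℕ) : ℤ)) ω (by simp)
      | succ k =>
        have hlt : n' < n' + ((k + 1 : ℕ) : ℤ) := by push_cast; omega
        rw [hDrec _ _ _ hlt]
        have hne : ((Finset.range (k + 1)).filter
            (fun j => val (fun j => Lbar j ω) n' j = 0)).Nonempty :=
          ⟨0, by simp [val_zero]⟩
        set T := (((Finset.range (k + 1)).filter
            (fun j => val (fun j => Lbar j ω) n' j = 0))).max' hne with hTdef
        have hTmem := Finset.max'_mem _ hne
        rw [Finset.mem_filter, Finset.mem_range] at hTmem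
        have hgreat : IsGreatest {z : ℤ | z < n' + ((k + 1 : ℕ) : ℤ) ∧ D n' z ω = 0}
            (n' + T) := by
          constructor
          · refine ⟨by push_cast; omega, ?_⟩
            rw [IH T (by omega)]
            exact hTmem.2
          · intro z hz
            obtain ⟨hz1, hz2⟩ := hz
            rcases le_or_gt z n' with h | h
            · have : (0 : ℤ) ≤ (T : ℤ) := by positivity
              omega
            · set j : ℕ := (z - n').toNat with hjdef
              have hzj : z = n' + (j : ℤ) := by omega
              have hjk : j ≤ k := by omega
              have hval0 : val (fun j => Lbar j ω) n' j = 0 := by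
                rw [← IH j (by omega), ← hzj]; exact hz2
              have hmem : j ∈ (Finset.range (k + 1)).filter
                  (fun j => val (fun j => Lbar j ω) n' j = 0) := by
                rw [Finset.mem_filter, Finset.mem_range]; exact ⟨by omega, hval0⟩
              have := Finset.le_max' _ j hmem
              omega
        rw [hgreat.csSup_eq, val_succ]
        have hmax : WithBot.unbotD 0 ((((Finset.range (k + 1)).filter
            (fun j => val (fun j => Lbar j ω) n' j = 0))).max) = T := by
          rw [← Finset.coe_max' hne, WithBot.unbotD_coe]
        rw [hmax]
        congr 1
        push_cast
        ring
  -- Step 1: inclusion into the union of return events of D^{(m)}.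
  have hsub : {ω : Ω | ∀ j : ℤ, -(l : ℤ) ≤ j → j ≤ 0 →
      ¬ (∀ i : ℤ, j ≤ i → i ≤ n → (Lbar i ω : ℤ) ≤ i - j)} ⊆
      ⋃ k ∈ Finset.range (n + 1), {ω : Ω | D m (k : ℤ) ω = 0} := by
    intro ω hω
    simp only [Set.mem_iUnion, Set.mem_setOf_eq, Finset.mem_range, exists_prop]
    by_contra hcon
    push_neg at hcon
    have hne : ((Finset.Icc m 0).filter (fun i => D m i ω = 0)).Nonempty :=
      ⟨m, by
        rw [Finset.mem_filter, Finset.mem_Icc]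
        exact ⟨⟨le_rfl, by omega⟩, hD0 m m ω le_rfl⟩⟩
    set τ := ((Finset.Icc m 0).filter (fun i => D m i ω = 0)).max' hne with hτ
    have hτmem := Finset.max'_mem _ hne
    rw [Finset.mem_filter, Finset.mem_Icc] at hτmem
    obtain ⟨⟨hτm, hτ0⟩, hτzero⟩ := hτmem
    rw [← hτ] at hτzero hτm hτ0
    have hτneg : τ ≤ -1 := by
      by_contra h
      have hτeq : τ = 0 := by omega
      rw [hτeq] at hτzero
      exact hcon 0 (by omega) (by simpa using hτzero)
    have hj := hω (τ + 1) (by omega) (by omega)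
    push_neg at hj
    obtain ⟨i, hij, hin, hLi⟩ := hj
    have him : m < i := by omega
    have hDi : D m i ω = 0 := by
      rw [hDrec m i ω him]
      have hgreat : IsGreatest {z : ℤ | z < i ∧ D m z ω = 0} τ := by
        constructor
        · exact ⟨by omega, hτzero⟩
        · intro z hz
          obtain ⟨hz1, hz2⟩ := hz
          by_contra hzτ
          push_neg at hzτ
          rcases le_or_gt z 0 with h0 | h0
          · have : z ≤ τ := Finset.le_max' _ z
              (by rw [Finset.mem_filter, Finset.mem_Icc]; exact ⟨⟨by omega, h0⟩, hz2⟩)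
            omega
          · have hz' : D m ((z.toNat : ℤ)) ω = 0 := by
              rw [Int.toNat_of_nonneg (by omega)]; exact hz2
            exact hcon z.toNat (by omega) hz'
      rw [hgreat.csSup_eq]
      omega
    rcases le_or_gt i 0 with h0 | h0
    · have : i ≤ τ := Finset.le_max' _ i
        (by rw [Finset.mem_filter, Finset.mem_Icc]; exact ⟨⟨by omega, h0⟩, hDi⟩)
      omega
    · exact hcon i.toNat (by omega) (by rw [Int.toNat_of_nonneg (by omega)]; exact hDi)
  -- Step 2: translation invariance.
  have key : ∀ k' : ℕ, P {ω | val (fun j => Lbar j ω) m k' = 0}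
      = P {ω | val (fun j => Lbar j ω) 0 k' = 0} := by
    intro k'
    have h1 : Measurable fun ω => (fun i : ℤ => Lbar (i + m) ω) :=
      measurable_pi_lambda _ fun i => hmeas _
    have h2 : Measurable fun ω => (fun i : ℤ => Lbar i ω) :=
      measurable_pi_lambda _ fun i => hmeas _
    have hA : MeasurableSet {g : ℤ → ℕ | val g 0 k' = 0} :=
      measurable_val 0 k' (measurableSet_singleton 0)
    have e1 := Measure.map_apply (μ := P) h1 hA
    have e2 := Measure.map_apply (μ := P) h2 hA
    rw [hshift m, e2] at e1
    have hpre : (fun ω => (fun i : ℤ => Lbar (i + m) ω)) ⁻¹' {g : ℤ → ℕ | val g 0 k' = 0}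
        = {ω | val (fun j => Lbar j ω) m k' = 0} := by
      ext ω
      simp only [Set.mem_preimage, Set.mem_setOf_eq]
      rw [show (fun i : ℤ => Lbar (i + m) ω) = (fun i : ℤ => (fun j => Lbar j ω) (i + m))
        from rfl, val_shift (fun j => Lbar j ω) m 0 k', zero_add]
    rw [hpre] at e1
    exact e1.symm
  -- Step 3: combine.
  refine le_trans (measure_mono hsub) ?_
  refine le_trans (measure_biUnion_finset_le _ _) ?_
  have hterm : ∀ k ∈ Finset.range (n + 1),
      P {ω : Ω | D m (k : ℤ) ω = 0} = P {ω : Ω | D 0 ((k + l + 1 : ℕ) : ℤ) ω = 0} := by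
    intro k _
    have hk : (k : ℤ) = m + ((k + l + 1 : ℕ) : ℤ) := by push_cast; omega
    have h1 : {ω : Ω | D m (k : ℤ) ω = 0}
        = {ω : Ω | val (fun j => Lbar j ω) m (k + l + 1) = 0} := by
      ext ω; rw [Set.mem_setOf_eq, Set.mem_setOf_eq, hk, Dval]
    have h2 : {ω : Ω | D 0 ((k + l + 1 : ℕ) : ℤ) ω = 0}
        = {ω : Ω | val (fun j => Lbar j ω) 0 (k + l + 1) = 0} := by
      ext ω
      rw [Set.mem_setOf_eq, Set.mem_setOf_eq,
        show ((k + l + 1 : ℕ) : ℤ) = 0 + ((k + l + 1 : ℕ) : ℤ) by ring, Dval]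
    rw [h1, h2, key]
  rw [Finset.sum_congr rfl hterm]
  apply le_of_eq
  refine Finset.sum_nbij' (fun k => k + l + 1) (fun k => k - l - 1) ?_ ?_ ?_ ?_ ?_
  · intro a ha; simp only [Finset.mem_range] at ha; simp only [Finset.mem_Icc]; omega
  · intro a ha; simp only [Finset.mem_Icc] at ha; simp only [Finset.mem_range]; omega
  · intro a ha; show a + l + 1 - l - 1 = a; omega
  · intro a ha; simp only [Finset.mem_Icc] at ha; show a - l - 1 + l + 1 = a; omega
  · intro a _; rfl
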